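/- arXiv:2511.02660 — 3 statements merged into one kernel-verified Lean document; each statement's English description precedes it below -/
import Mathlib

section
/- For the Marčenko–Pastur law with ratio index y ∈ (0,1) and scale index σ² = 1, whose density is p(x) = (1/(2πxy))√((b−x)(x−a)) on [a,b] with a = (1−√y)², b = (1+√y)², the integral of g(x) = x − log(x) − 1 against this law equals 1 + ((1−y)/y)·log(1−y). -/
open Real MeasureTheory intervalIntegral


private lemma MPaux.cont_cos (c : ℝ) : Continuous fun θ : ℝ => Real.cos (c * θ) := by
  fun_prop

private lemma MPaux.cos_int (m : ℤ) : (∫ θ in (0:ℝ)..π, Real.cos (m * θ)) = if m = 0 then π else 0 := by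
  rcases eq_or_ne m 0 with rfl | hm
  · simp
  · simp only [if_neg hm]
    have key : ∀ θ : ℝ, HasDerivAt (fun t : ℝ => Real.sin (m * t) / m) (Real.cos (m * θ)) θ := by
      intro θ
      have hm' : (m:ℝ) ≠ 0 := Int.cast_ne_zero.mpr hm
      have h1 : HasDerivAt (fun t : ℝ => Real.sin ((m:ℝ) * t)) (Real.cos ((m:ℝ) * θ) * ((m:ℝ) * 1)) θ :=
        ((hasDerivAt_id θ).const_mul (m:ℝ)).sin
      have := h1.div_const (m : ℝ)
      have he : Real.cos ((m:ℝ) * θ) * ((m:ℝ) * 1) / m = Real.cos ((m:ℝ) * θ) := by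
        field_simp
      rwa [he] at this
    rw [intervalIntegral.integral_eq_sub_of_hasDerivAt (fun θ _ => key θ)
      ((MPaux.cont_cos m).intervalIntegrable 0 π)]
    simp [Real.sin_int_mul_pi]

private lemma MPaux.orth (n k : ℕ) :
    (∫ θ in (0:ℝ)..π, Real.cos (n * θ) * Real.cos (k * θ))
      = if n = k then (if n = 0 then π else π / 2) else 0 := by
  have hid : ∀ θ : ℝ, Real.cos (n * θ) * Real.cos (k * θ)
      = Real.cos ((((n:ℤ) + k : ℤ) : ℝ) * θ) / 2 + Real.cos ((((n:ℤ) - k : ℤ) : ℝ) * θ) / 2 := by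
    intro θ
    have := Real.cos_add ((n:ℝ) * θ) ((k:ℝ) * θ)
    have h2 := Real.cos_sub ((n:ℝ) * θ) ((k:ℝ) * θ)
    push_cast
    rw [add_mul, sub_mul]
    nlinarith [this, h2]
  rw [intervalIntegral.integral_congr (fun θ _ => hid θ), intervalIntegral.integral_add
      (((MPaux.cont_cos _).div_const 2).intervalIntegrable 0 π)
      (((MPaux.cont_cos _).div_const 2).intervalIntegrable 0 π)]
  rw [intervalIntegral.integral_div, intervalIntegral.integral_div, MPaux.cos_int, MPaux.cos_int]
  rcases eq_or_ne n k with rfl | hnk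
  · rcases eq_or_ne n 0 with rfl | hn
    · simp
    · have h1 : ((n:ℤ) + n) ≠ 0 := by positivity
      simp [h1, if_neg hn]
  · have h2 : ¬ ((n:ℤ) - k = 0) := by
      intro h; apply hnk; omega
    have h3 : ¬ ((n:ℤ) + k = 0) ∨ ((n:ℤ) + k = 0) := (em _).symm
    rcases eq_or_ne ((n:ℤ) + k) 0 with h4 | h4
    · have : n = 0 ∧ k = 0 := by omega
      exact absurd (this.1.trans this.2.symm) hnk
    · simp [h4, h2, if_neg hnk]



private lemma MPaux.xge {s : ℝ} (hs0 : 0 ≤ s) (θ : ℝ) :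
    (1 - s) ^ 2 ≤ 1 - 2 * s * Real.cos θ + s ^ 2 := by
  nlinarith [Real.cos_le_one θ]

private lemma MPaux.xpos {s : ℝ} (hs0 : 0 ≤ s) (hs1 : s < 1) (θ : ℝ) :
    0 < 1 - 2 * s * Real.cos θ + s ^ 2 := by
  nlinarith [Real.cos_le_one θ, sq_nonneg (1 - s)]

private lemma MPaux.renorm {s θ : ℝ} :
    Complex.normSq (1 - (s : ℂ) * Complex.exp (θ * Complex.I))
      = 1 - 2 * s * Real.cos θ + s ^ 2 := by
  have h1 : ((1 : ℂ) - (s : ℂ) * Complex.exp (θ * Complex.I)).re = 1 - s * Real.cos θ := by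
    simp [Complex.re_ofReal_mul, Complex.exp_ofReal_mul_I_re]
  have h2 : ((1 : ℂ) - (s : ℂ) * Complex.exp (θ * Complex.I)).im = -(s * Real.sin θ) := by
    simp [Complex.im_ofReal_mul, Complex.exp_ofReal_mul_I_im]
  rw [Complex.normSq_apply, h1, h2]
  nlinarith [Real.sin_sq_add_cos_sq θ]

private lemma MPaux.geom {s : ℝ} (hs0 : 0 ≤ s) (hs1 : s < 1) (θ : ℝ) :
    HasSum (fun n : ℕ => s ^ n * Real.cos (n * θ))
      ((1 - s * Real.cos θ) / (1 - 2 * s * Real.cos θ + s ^ 2)) := by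
  set z : ℂ := (s : ℂ) * Complex.exp (θ * Complex.I) with hzdef
  have hz : ‖z‖ < 1 := by
    have : ‖Complex.exp (θ * Complex.I)‖ = 1 := Complex.norm_exp_ofReal_mul_I θ
    simp only [hzdef, norm_mul, this, Complex.norm_real, Real.norm_eq_abs, mul_one]
    rwa [abs_of_nonneg hs0]
  have h := Complex.hasSum_re (hasSum_geometric_of_norm_lt_one hz)
  have hre : ∀ n : ℕ, (z ^ n).re = s ^ n * Real.cos (n * θ) := by
    intro n
    have hzn : z ^ n = ((s ^ n : ℝ) : ℂ) * Complex.exp (((n * θ : ℝ) : ℂ) * Complex.I) := by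
      rw [hzdef, mul_pow, ← Complex.exp_nat_mul]
      push_cast
      ring_nf
    rw [hzn, Complex.re_ofReal_mul, Complex.exp_ofReal_mul_I_re]
  have htgt : ((1 - z)⁻¹).re = (1 - s * Real.cos θ) / (1 - 2 * s * Real.cos θ + s ^ 2) := by
    rw [Complex.inv_re, MPaux.renorm]
    congr 1
    simp [hzdef, Complex.re_ofReal_mul, Complex.exp_ofReal_mul_I_re]
  rw [funext hre, htgt] at h
  exact h



private lemma MPaux.zpow_re (s θ : ℝ) (n : ℕ) :
    (((s : ℂ) * Complex.exp (θ * Complex.I)) ^ n).re = s ^ n * Real.cos (n * θ) := by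
  have hzn : ((s : ℂ) * Complex.exp (θ * Complex.I)) ^ n
      = ((s ^ n : ℝ) : ℂ) * Complex.exp (((n * θ : ℝ) : ℂ) * Complex.I) := by
    rw [mul_pow, ← Complex.exp_nat_mul]
    push_cast
    ring_nf
  rw [hzn, Complex.re_ofReal_mul, Complex.exp_ofReal_mul_I_re]

private lemma MPaux.renorm' {s θ : ℝ} :
    Complex.normSq (1 - (s : ℂ) * Complex.exp (θ * Complex.I))
      = 1 - 2 * s * Real.cos θ + s ^ 2 := by
  have h1 : ((1 : ℂ) - (s : ℂ) * Complex.exp (θ * Complex.I)).re = 1 - s * Real.cos θ := by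
    simp [Complex.re_ofReal_mul, Complex.exp_ofReal_mul_I_re]
  have h2 : ((1 : ℂ) - (s : ℂ) * Complex.exp (θ * Complex.I)).im = -(s * Real.sin θ) := by
    simp [Complex.im_ofReal_mul, Complex.exp_ofReal_mul_I_im]
  rw [Complex.normSq_apply, h1, h2]
  nlinarith [Real.sin_sq_add_cos_sq θ]

private lemma MPaux.logsum {s : ℝ} (hs0 : 0 ≤ s) (hs1 : s < 1) (θ : ℝ) :
    HasSum (fun n : ℕ => -2 * (s ^ n * Real.cos (n * θ) / n))
      (Real.log (1 - 2 * s * Real.cos θ + s ^ 2)) := by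
  set z : ℂ := (s : ℂ) * Complex.exp (θ * Complex.I) with hzdef
  have hz : ‖z‖ < 1 := by
    have : ‖Complex.exp (θ * Complex.I)‖ = 1 := Complex.norm_exp_ofReal_mul_I θ
    simp only [hzdef, norm_mul, this, Complex.norm_real, Real.norm_eq_abs, mul_one]
    rwa [abs_of_nonneg hs0]
  have hzne : (1 : ℂ) - z ≠ 0 := by
    intro h
    have : (1 : ℂ) = z := by linear_combination h
    rw [← this] at hz
    simp at hz
  have h := Complex.hasSum_re (Complex.hasSum_taylorSeries_neg_log hz)
  have hre : ∀ n : ℕ, (z ^ n / (n : ℂ)).re = s ^ n * Real.cos (n * θ) / n := by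
    intro n
    rw [show ((n : ℂ)) = ((n : ℝ) : ℂ) by push_cast; rfl, Complex.div_ofReal_re,
      MPaux.zpow_re]
  have habs : ‖1 - z‖ ^ 2 = 1 - 2 * s * Real.cos θ + s ^ 2 := by
    rw [Complex.sq_norm, hzdef, MPaux.renorm']
  have hlog : (-Complex.log (1 - z)).re = -(1/2) * Real.log (1 - 2 * s * Real.cos θ + s ^ 2) := by
    rw [Complex.neg_re, Complex.log_re, ← habs, Real.log_pow]
    push_cast
    ring
  rw [funext hre, hlog] at h
  have h2 := h.mul_left (-2)
  have : -2 * (-(1/2) * Real.log (1 - 2 * s * Real.cos θ + s ^ 2))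
      = Real.log (1 - 2 * s * Real.cos θ + s ^ 2) := by ring
  rwa [this] at h2



private lemma MPaux.Ik {s : ℝ} (hs0 : 0 ≤ s) (hs1 : s < 1) (k : ℕ) :
    (∫ θ in (0:ℝ)..π, Real.cos (k * θ) / (1 - 2 * s * Real.cos θ + s ^ 2))
      = π * s ^ k / (1 - s ^ 2) := by
  have hc2 : (0:ℝ) < 1 - s ^ 2 := by nlinarith
  set F : ℕ → ℝ → ℝ := fun n θ =>
    (2 * s ^ n / (1 - s ^ 2)) * (Real.cos (n * θ) * Real.cos (k * θ))
      - (if n = 0 then 1 else 0) * (Real.cos (k * θ) / (1 - s ^ 2)) with hF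
  have hcontF : ∀ n, Continuous (F n) := by
    intro n
    rw [hF]
    fun_prop
  have h_lim : ∀ θ : ℝ, HasSum (fun n => F n θ)
      (Real.cos (k * θ) / (1 - 2 * s * Real.cos θ + s ^ 2)) := by
    intro θ
    have hx := MPaux.xpos hs0 hs1 θ
    have hg := (MPaux.geom hs0 hs1 θ).mul_left 2
    have hone : HasSum (fun n : ℕ => if n = 0 then (1:ℝ) else 0) 1 := hasSum_ite_eq 0 1
    have h := (hg.sub hone).mul_right (Real.cos (k * θ) / (1 - s ^ 2))
    have heq : (2 * ((1 - s * Real.cos θ) / (1 - 2 * s * Real.cos θ + s ^ 2)) - 1)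
        * (Real.cos (k * θ) / (1 - s ^ 2))
        = Real.cos (k * θ) / (1 - 2 * s * Real.cos θ + s ^ 2) := by
      field_simp
      ring
    rw [heq] at h
    have hfe : (fun n => F n θ) = fun i : ℕ => (2 * (s ^ i * Real.cos ((i:ℝ) * θ)) - if i = 0 then 1 else 0) * (Real.cos (↑k * θ) / (1 - s ^ 2)) := by
      funext n
      rw [hF]
      ring
    rw [hfe]
    exact h
  have swap : HasSum (fun n => ∫ θ in (0:ℝ)..π, F n θ)
      (∫ θ in (0:ℝ)..π, Real.cos (k * θ) / (1 - 2 * s * Real.cos θ + s ^ 2)) := by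
    apply intervalIntegral.hasSum_integral_of_dominated_convergence
      (bound := fun n _ => 3 * s ^ n / (1 - s ^ 2))
    · exact fun n => (hcontF n).aestronglyMeasurable
    · intro n
      filter_upwards with θ _
      rw [hF]
      have h1 : |Real.cos (n * θ)| ≤ 1 := Real.abs_cos_le_one _
      have h2 : |Real.cos (k * θ)| ≤ 1 := Real.abs_cos_le_one _
      have hsn0 : (0:ℝ) ≤ s ^ n := pow_nonneg hs0 n
      rw [Real.norm_eq_abs]
      refine le_trans (abs_sub _ _) ?_
      have e1 : |2 * s ^ n / (1 - s ^ 2) * (Real.cos (n * θ) * Real.cos (k * θ))|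
          ≤ 2 * s ^ n / (1 - s ^ 2) := by
        rw [abs_mul, abs_of_nonneg (by positivity : (0:ℝ) ≤ 2 * s ^ n / (1 - s ^ 2)), abs_mul]
        nlinarith [mul_le_one₀ h1 (abs_nonneg (Real.cos (k * θ))) h2,
          abs_nonneg (Real.cos (n * θ) * Real.cos (k * θ)), div_nonneg (by positivity : (0:ℝ) ≤ 2 * s ^ n) hc2.le,
          mul_nonneg (abs_nonneg (Real.cos (n*θ))) (abs_nonneg (Real.cos (k*θ)))]
      have e2 : |(if n = 0 then (1:ℝ) else 0) * (Real.cos (k * θ) / (1 - s ^ 2))|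
          ≤ s ^ n / (1 - s ^ 2) := by
        rcases eq_or_ne n 0 with rfl | hn
        · simp only [if_pos rfl, pow_zero, ite_self, if_true, one_mul]
          rw [abs_div, abs_of_pos hc2]
          gcongr
        · simp only [if_neg hn, zero_mul, abs_zero]
          positivity
      have : 3 * s ^ n / (1 - s ^ 2) = 2 * s ^ n / (1 - s ^ 2) + s ^ n / (1 - s ^ 2) := by ring
      rw [this]
      exact add_le_add e1 e2
    · filter_upwards with θ _
      apply Summable.div_const
      exact (summable_geometric_of_lt_one hs0 hs1).mul_left 3
    · exact intervalIntegrable_const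
    · filter_upwards with θ _
      exact h_lim θ
  have hval : ∀ n, (∫ θ in (0:ℝ)..π, F n θ)
      = if n = k then π * s ^ k / (1 - s ^ 2) else 0 := by
    intro n
    rw [hF]
    simp only
    rw [intervalIntegral.integral_sub
        ((by fun_prop : Continuous fun θ => (2 * s ^ n / (1 - s ^ 2)) * (Real.cos (n * θ) * Real.cos (k * θ))).intervalIntegrable 0 π)
        ((by fun_prop : Continuous fun θ => (if n = 0 then (1:ℝ) else 0) * (Real.cos (k * θ) / (1 - s ^ 2))).intervalIntegrable 0 π),
      intervalIntegral.integral_const_mul, intervalIntegral.integral_const_mul,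
      intervalIntegral.integral_div, MPaux.orth]
    have hck : (∫ θ in (0:ℝ)..π, Real.cos (k * θ)) = if k = 0 then π else 0 := by
      have := MPaux.cos_int (k : ℤ)
      simp only [Int.cast_natCast] at this
      rw [this]
      simp
    rw [hck]
    rcases eq_or_ne n k with rfl | hnk
    · rcases eq_or_ne n 0 with rfl | hn
      · simp only [if_pos rfl, ↓reduceIte]
        field_simp
        ring
      · simp only [if_pos rfl, if_neg hn, ↓reduceIte]
        field_simp
        ring
    · simp only [if_neg hnk]
      rcases eq_or_ne n 0 with rfl | hn
      · have hk : k ≠ 0 := fun h => hnk h.symm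
        simp [if_neg hk]
      · simp [if_neg hn]
  rw [funext hval] at swap
  exact swap.unique (hasSum_ite_eq k _)


private lemma MPaux.contx {s : ℝ} (hs0 : 0 ≤ s) (hs1 : s < 1) :
    Continuous fun θ : ℝ => 1 - 2 * s * Real.cos θ + s ^ 2 := by fun_prop

private lemma MPaux.trig (a θ : ℝ) :
    Real.cos (a * θ) * Real.sin θ ^ 2
      = Real.cos (a * θ) / 2 - Real.cos ((a + 2) * θ) / 4 - Real.cos ((a - 2) * θ) / 4 := by
  rw [add_mul, sub_mul, Real.cos_add, Real.cos_sub]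
  have h1 : Real.cos (2 * θ) = 1 - 2 * Real.sin θ ^ 2 := Real.cos_two_mul' θ ▸ by
    nlinarith [Real.sin_sq_add_cos_sq θ, Real.cos_two_mul θ]
  linear_combination (Real.cos (a * θ) / 2) * h1

private lemma MPaux.split3 {s : ℝ} (hs0 : 0 ≤ s) (hs1 : s < 1) (a : ℝ) :
    (∫ θ in (0:ℝ)..π, Real.cos (a * θ) * Real.sin θ ^ 2 / (1 - 2 * s * Real.cos θ + s ^ 2))
      = (∫ θ in (0:ℝ)..π, Real.cos (a * θ) / (1 - 2 * s * Real.cos θ + s ^ 2)) / 2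
        - (∫ θ in (0:ℝ)..π, Real.cos ((a + 2) * θ) / (1 - 2 * s * Real.cos θ + s ^ 2)) / 4
        - (∫ θ in (0:ℝ)..π, Real.cos ((a - 2) * θ) / (1 - 2 * s * Real.cos θ + s ^ 2)) / 4 := by
  have hx : ∀ θ : ℝ, (1 - 2 * s * Real.cos θ + s ^ 2) ≠ 0 :=
    fun θ => (MPaux.xpos hs0 hs1 θ).ne'
  have hcont : ∀ c : ℝ, Continuous fun θ : ℝ => Real.cos (c * θ) / (1 - 2 * s * Real.cos θ + s ^ 2) :=
    fun c => (by fun_prop : Continuous fun θ : ℝ => Real.cos (c * θ)).div (MPaux.contx hs0 hs1) hx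
  rw [← intervalIntegral.integral_div, ← intervalIntegral.integral_div, ← intervalIntegral.integral_div,
    ← intervalIntegral.integral_sub (((hcont a).div_const 2).intervalIntegrable 0 π)
      (((hcont (a+2)).div_const 4).intervalIntegrable 0 π),
    ← intervalIntegral.integral_sub (f := fun θ : ℝ => Real.cos (a * θ) / (1 - 2 * s * Real.cos θ + s ^ 2) / 2 - Real.cos ((a + 2) * θ) / (1 - 2 * s * Real.cos θ + s ^ 2) / 4)
      ((((hcont a).div_const 2).sub ((hcont (a+2)).div_const 4)).intervalIntegrable 0 π)
      (((hcont (a-2)).div_const 4).intervalIntegrable 0 π)]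
  apply intervalIntegral.integral_congr
  intro θ _
  have := MPaux.trig a θ
  linear_combination this / (1 - 2 * s * Real.cos θ + s ^ 2)

private lemma MPaux.a0 {s : ℝ} (hs0 : 0 ≤ s) (hs1 : s < 1) :
    (∫ θ in (0:ℝ)..π, Real.sin θ ^ 2 / (1 - 2 * s * Real.cos θ + s ^ 2)) = π / 2 := by
  have h := MPaux.split3 hs0 hs1 0
  have hc2 : (0:ℝ) < 1 - s ^ 2 := by nlinarith
  have e1 : (∫ θ in (0:ℝ)..π, Real.cos ((0:ℝ) * θ) * Real.sin θ ^ 2 / (1 - 2 * s * Real.cos θ + s ^ 2))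
      = ∫ θ in (0:ℝ)..π, Real.sin θ ^ 2 / (1 - 2 * s * Real.cos θ + s ^ 2) := by
    apply intervalIntegral.integral_congr; intro θ _; simp
  have e2 : (∫ θ in (0:ℝ)..π, Real.cos ((0:ℝ) - 2) * θ.cos / 1) = 0 := by simp
  have i0 : (∫ θ in (0:ℝ)..π, Real.cos ((0:ℝ) * θ) / (1 - 2 * s * Real.cos θ + s ^ 2))
      = π / (1 - s ^ 2) := by
    have := MPaux.Ik hs0 hs1 0
    simpa using this
  have i2 : (∫ θ in (0:ℝ)..π, Real.cos (((0:ℝ) + 2) * θ) / (1 - 2 * s * Real.cos θ + s ^ 2))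
      = π * s ^ 2 / (1 - s ^ 2) := by
    have := MPaux.Ik hs0 hs1 2
    rw [← this]
    apply intervalIntegral.integral_congr; intro θ _; norm_num
  have im2 : (∫ θ in (0:ℝ)..π, Real.cos (((0:ℝ) - 2) * θ) / (1 - 2 * s * Real.cos θ + s ^ 2))
      = π * s ^ 2 / (1 - s ^ 2) := by
    have := MPaux.Ik hs0 hs1 2
    rw [← this]
    apply intervalIntegral.integral_congr; intro θ _
    have harg : ((0:ℝ) - 2) * θ = -(((2:ℕ):ℝ) * θ) := by push_cast; ring
    simp only [harg, Real.cos_neg]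
  rw [e1] at h
  rw [h, i0, i2, im2]
  field_simp
  ring

private lemma MPaux.a1 {s : ℝ} (hs0 : 0 ≤ s) (hs1 : s < 1) :
    (∫ θ in (0:ℝ)..π, Real.cos θ * Real.sin θ ^ 2 / (1 - 2 * s * Real.cos θ + s ^ 2))
      = π * s / 4 := by
  have h := MPaux.split3 hs0 hs1 1
  have hc2 : (0:ℝ) < 1 - s ^ 2 := by nlinarith
  have e1 : (∫ θ in (0:ℝ)..π, Real.cos ((1:ℝ) * θ) * Real.sin θ ^ 2 / (1 - 2 * s * Real.cos θ + s ^ 2))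
      = ∫ θ in (0:ℝ)..π, Real.cos θ * Real.sin θ ^ 2 / (1 - 2 * s * Real.cos θ + s ^ 2) := by
    apply intervalIntegral.integral_congr; intro θ _; norm_num
  have i1 : (∫ θ in (0:ℝ)..π, Real.cos ((1:ℝ) * θ) / (1 - 2 * s * Real.cos θ + s ^ 2))
      = π * s / (1 - s ^ 2) := by
    have := MPaux.Ik hs0 hs1 1
    norm_num at this
    rw [← this]
    apply intervalIntegral.integral_congr; intro θ _; norm_num
  have i3 : (∫ θ in (0:ℝ)..π, Real.cos (((1:ℝ) + 2) * θ) / (1 - 2 * s * Real.cos θ + s ^ 2))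
      = π * s ^ 3 / (1 - s ^ 2) := by
    have := MPaux.Ik hs0 hs1 3
    rw [← this]
    apply intervalIntegral.integral_congr; intro θ _; norm_num
  have im1 : (∫ θ in (0:ℝ)..π, Real.cos (((1:ℝ) - 2) * θ) / (1 - 2 * s * Real.cos θ + s ^ 2))
      = π * s / (1 - s ^ 2) := by
    have := MPaux.Ik hs0 hs1 1
    norm_num at this
    rw [← this]
    apply intervalIntegral.integral_congr; intro θ _
    have harg : ((1:ℝ) - 2) * θ = -(θ) := by ring
    simp only [harg, Real.cos_neg]
  rw [e1] at h
  rw [h, i1, i3, im1]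
  field_simp
  ring

private lemma MPaux.an {s : ℝ} (hs0 : 0 ≤ s) (hs1 : s < 1) (m : ℕ) :
    (∫ θ in (0:ℝ)..π, Real.cos (((m:ℝ) + 2) * θ) * Real.sin θ ^ 2 / (1 - 2 * s * Real.cos θ + s ^ 2))
      = -(π * s ^ m * (1 - s ^ 2)) / 4 := by
  have h := MPaux.split3 hs0 hs1 ((m:ℝ) + 2)
  have hc2 : (0:ℝ) < 1 - s ^ 2 := by nlinarith
  have i1 : (∫ θ in (0:ℝ)..π, Real.cos (((m:ℝ) + 2) * θ) / (1 - 2 * s * Real.cos θ + s ^ 2))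
      = π * s ^ (m + 2) / (1 - s ^ 2) := by
    have := MPaux.Ik hs0 hs1 (m + 2)
    rw [← this]
    apply intervalIntegral.integral_congr; intro θ _
    norm_num
  have i2 : (∫ θ in (0:ℝ)..π, Real.cos ((((m:ℝ) + 2) + 2) * θ) / (1 - 2 * s * Real.cos θ + s ^ 2))
      = π * s ^ (m + 4) / (1 - s ^ 2) := by
    have := MPaux.Ik hs0 hs1 (m + 4)
    rw [← this]
    apply intervalIntegral.integral_congr; intro θ _
    norm_num
    ring_nf
  have i3 : (∫ θ in (0:ℝ)..π, Real.cos ((((m:ℝ) + 2) - 2) * θ) / (1 - 2 * s * Real.cos θ + s ^ 2))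
      = π * s ^ m / (1 - s ^ 2) := by
    have := MPaux.Ik hs0 hs1 m
    rw [← this]
    apply intervalIntegral.integral_congr; intro θ _
    norm_num
  rw [h, i1, i2, i3]
  have hp2 : s ^ (m + 2) = s ^ m * s ^ 2 := pow_add s m 2
  have hp4 : s ^ (m + 4) = s ^ m * s ^ 2 * s ^ 2 := by
    rw [pow_add]; ring
  rw [hp2, hp4]
  field_simp
  ring


private lemma MPaux.J {s : ℝ} (hs0 : 0 < s) (hs1 : s < 1) :
    (∫ θ in (0:ℝ)..π,
        Real.log (1 - 2 * s * Real.cos θ + s ^ 2) * Real.sin θ ^ 2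
          / (1 - 2 * s * Real.cos θ + s ^ 2))
      = -(π / 2) * (1 + ((1 - s ^ 2) / s ^ 2) * Real.log (1 - s ^ 2)) := by
  have hs0' : (0:ℝ) ≤ s := hs0.le
  have hc2 : (0:ℝ) < 1 - s ^ 2 := by nlinarith
  have hd : (0:ℝ) < (1 - s) ^ 2 := by nlinarith
  have hxne : ∀ θ : ℝ, (1 - 2 * s * Real.cos θ + s ^ 2) ≠ 0 :=
    fun θ => (MPaux.xpos hs0' hs1 θ).ne'
  have hcx : Continuous fun θ : ℝ => 1 - 2 * s * Real.cos θ + s ^ 2 := by fun_prop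
  set F : ℕ → ℝ → ℝ := fun n θ =>
    (-2 * (s ^ n * Real.cos (n * θ) / n)) *
      (Real.sin θ ^ 2 / (1 - 2 * s * Real.cos θ + s ^ 2)) with hF
  have hcontF : ∀ n, Continuous (F n) := by
    intro n
    apply Continuous.mul (by fun_prop)
    exact (by fun_prop : Continuous fun θ : ℝ => Real.sin θ ^ 2).div hcx hxne
  -- the series swap
  have swap : HasSum (fun n => ∫ θ in (0:ℝ)..π, F n θ)
      (∫ θ in (0:ℝ)..π, Real.log (1 - 2 * s * Real.cos θ + s ^ 2) * Real.sin θ ^ 2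
          / (1 - 2 * s * Real.cos θ + s ^ 2)) := by
    apply intervalIntegral.hasSum_integral_of_dominated_convergence
      (bound := fun n _ => 2 * s ^ n / (1 - s) ^ 2)
    · exact fun n => (hcontF n).aestronglyMeasurable
    · intro n
      filter_upwards with θ _
      rw [hF, Real.norm_eq_abs]
      simp only
      rw [abs_mul]
      have h1 : |(-2 : ℝ) * (s ^ n * Real.cos (n * θ) / n)| ≤ 2 * s ^ n := by
        rcases Nat.eq_zero_or_pos n with rfl | hn
        · simp
        · have hnp : (0:ℝ) < n := by exact_mod_cast hn
          rw [abs_mul, abs_div, abs_mul, abs_of_pos hnp, abs_of_nonneg (pow_nonneg hs0' n)]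
          have hcos := Real.abs_cos_le_one ((n:ℝ) * θ)
          have e1 : s ^ n * |Real.cos ((n:ℝ) * θ)| / (n:ℝ) ≤ s ^ n := by
            rw [div_le_iff₀ hnp]
            nlinarith [pow_nonneg hs0' n, abs_nonneg (Real.cos ((n:ℝ)*θ)),
              (by exact_mod_cast hn : (1:ℝ) ≤ (n:ℝ))]
          have e2 : |(-2:ℝ)| = 2 := by norm_num
          rw [e2]
          nlinarith [e1]
      have h2 : |Real.sin θ ^ 2 / (1 - 2 * s * Real.cos θ + s ^ 2)| ≤ 1 / (1 - s) ^ 2 := by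
        rw [abs_div, abs_of_pos (MPaux.xpos hs0' hs1 θ)]
        rw [div_le_div_iff₀ (MPaux.xpos hs0' hs1 θ) hd]
        have h3 : |Real.sin θ ^ 2| ≤ 1 := by
          rw [abs_of_nonneg (sq_nonneg _)]
          nlinarith [Real.sin_sq_add_cos_sq θ, sq_nonneg (Real.cos θ)]
        nlinarith [MPaux.xge hs0' θ, MPaux.xpos hs0' hs1 θ, abs_nonneg (Real.sin θ ^ 2)]
      calc |(-2 : ℝ) * (s ^ n * Real.cos (n * θ) / n)| * |Real.sin θ ^ 2 / (1 - 2 * s * Real.cos θ + s ^ 2)|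
          ≤ (2 * s ^ n) * (1 / (1 - s) ^ 2) := by
            apply mul_le_mul h1 h2 (abs_nonneg _) (by positivity)
        _ = 2 * s ^ n / (1 - s) ^ 2 := by ring
    · filter_upwards with θ _
      apply Summable.div_const
      exact (summable_geometric_of_lt_one hs0' hs1).mul_left 2
    · exact intervalIntegrable_const
    · filter_upwards with θ _
      have h := (MPaux.logsum hs0' hs1 θ).mul_right
        (Real.sin θ ^ 2 / (1 - 2 * s * Real.cos θ + s ^ 2))
      simpa [hF, mul_div_assoc] using h
  -- values of the integrals
  have hval : ∀ n : ℕ, (∫ θ in (0:ℝ)..π, F n θ)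
      = (if n = 0 then 0 else if n = 1 then -(π * s ^ 2) / 2
          else (π * (1 - s ^ 2) / 2) * (s ^ (2 * n - 2) / n)) := by
    intro n
    match n with
    | 0 =>
      simp [hF]
    | 1 =>
      rw [hF]
      simp only
      have : ∀ θ : ℝ, (-2 * (s ^ 1 * Real.cos ((1:ℕ) * θ) / (1:ℕ))) *
          (Real.sin θ ^ 2 / (1 - 2 * s * Real.cos θ + s ^ 2))
          = (-2 * s) * (Real.cos θ * Real.sin θ ^ 2 / (1 - 2 * s * Real.cos θ + s ^ 2)) := by
        intro θ
        push_cast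
        ring
      rw [intervalIntegral.integral_congr (fun θ _ => this θ),
        intervalIntegral.integral_const_mul, MPaux.a1 hs0' hs1]
      norm_num
      ring
    | (m + 2) =>
      rw [hF]
      simp only
      have : ∀ θ : ℝ, (-2 * (s ^ (m+2) * Real.cos (((m+2:ℕ):ℝ) * θ) / ((m+2:ℕ):ℝ))) *
          (Real.sin θ ^ 2 / (1 - 2 * s * Real.cos θ + s ^ 2))
          = (-2 * s ^ (m+2) / ((m+2:ℕ):ℝ)) *
            (Real.cos (((m:ℝ) + 2) * θ) * Real.sin θ ^ 2 / (1 - 2 * s * Real.cos θ + s ^ 2)) := by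
        intro θ
        push_cast
        ring
      rw [intervalIntegral.integral_congr (fun θ _ => this θ),
        intervalIntegral.integral_const_mul, MPaux.an hs0' hs1 m]
      have h1 : (m + 2 : ℕ) ≠ 0 := by omega
      have h2 : (m + 2 : ℕ) ≠ 1 := by omega
      rw [if_neg h1, if_neg h2]
      have h3 : 2 * (m + 2) - 2 = 2 * m + 2 := by omega
      rw [h3]
      have h4 : s ^ (2 * m + 2) = s ^ (m + 2) * s ^ m := by
        rw [← pow_add]
        congr 1
        omega
      rw [h4]
      have hm2 : ((m + 2 : ℕ):ℝ) ≠ 0 := by positivity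
      field_simp
      ring
  rw [funext hval] at swap
  -- evaluate the sum
  have hsum : HasSum (fun n : ℕ => (if n = 0 then 0 else if n = 1 then -(π * s ^ 2) / 2
          else (π * (1 - s ^ 2) / 2) * (s ^ (2 * n - 2) / n)))
      (-(π / 2) * (1 + ((1 - s ^ 2) / s ^ 2) * Real.log (1 - s ^ 2))) := by
    have habs : |s ^ 2| < 1 := by
      rw [abs_of_nonneg (sq_nonneg s)]
      nlinarith
    have base := (Real.hasSum_pow_div_log_of_abs_lt_one habs).mul_left (π * (1 - s ^ 2) / (2 * s ^ 2))
    -- base : HasSum (fun n => c * ((s^2)^(n+1)/(n+1))) (c * -log (1-s^2))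
    set w : ℕ → ℝ := fun n => (π * (1 - s ^ 2) / 2) * (s ^ (2 * n - 2) / n) with hw
    have hbase' : HasSum (fun n : ℕ => w (n + 1))
        ((π * (1 - s ^ 2) / (2 * s ^ 2)) * -Real.log (1 - s ^ 2)) := by
      have hfeq : (fun n : ℕ => w (n + 1))
          = fun n : ℕ => (π * (1 - s ^ 2) / (2 * s ^ 2)) * ((s ^ 2) ^ (n + 1) / ((n:ℝ) + 1)) := by
        funext n
        rw [hw]
        simp only
        have h1 : 2 * (n + 1) - 2 = 2 * n := by omega
        rw [h1]
        have h2 : (s ^ 2) ^ (n + 1) = s ^ (2 * n) * s ^ 2 := by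
          rw [← pow_mul, ← pow_add]
          ring
        rw [h2]
        have hs2 : (s:ℝ) ^ 2 ≠ 0 := by positivity
        push_cast
        field_simp
      rw [hfeq]
      exact base
    have hw0 : w 0 = 0 := by simp [hw]
    have hwsum : HasSum w ((π * (1 - s ^ 2) / (2 * s ^ 2)) * -Real.log (1 - s ^ 2)) := by
      apply (hasSum_nat_add_iff' (f := w) 1).mp
      have hr : ∑ i ∈ Finset.range 1, w i = 0 := by simp [hw0]
      rw [hr, sub_zero]
      exact hbase'
    have hdelta : HasSum (fun n : ℕ => if n = 1 then (-(π * s ^ 2) / 2 - w 1) else 0)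
        (-(π * s ^ 2) / 2 - w 1) := hasSum_ite_eq 1 _
    have := hwsum.add hdelta
    have hfun : ∀ n : ℕ, w n + (if n = 1 then (-(π * s ^ 2) / 2 - w 1) else 0)
        = (if n = 0 then 0 else if n = 1 then -(π * s ^ 2) / 2
          else (π * (1 - s ^ 2) / 2) * (s ^ (2 * n - 2) / n)) := by
      intro n
      match n with
      | 0 => simp [hw0]
      | 1 => simp
      | (m + 2) =>
        have h1 : (m + 2 : ℕ) ≠ 0 := by omega
        have h2 : (m + 2 : ℕ) ≠ 1 := by omega
        simp [h1, h2, hw]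
    rw [funext hfun] at this
    convert this using 1
    have hw1 : w 1 = π * (1 - s ^ 2) / 2 := by
      rw [hw]
      norm_num
    rw [hw1]
    have hs2 : (s:ℝ) ^ 2 ≠ 0 := by positivity
    field_simp
    ring
  exact swap.unique hsum


/-- Density of the Marčenko–Pastur law with ratio index `y` and scale index 1. -/
noncomputable def mpDensity (y x : ℝ) : ℝ :=
  (1 / (2 * Real.pi * x * y)) *
    Real.sqrt (((1 + Real.sqrt y) ^ 2 - x) * (x - (1 - Real.sqrt y) ^ 2))

/-- The integral of `g(x) = x - log x - 1` against the Marčenko–Pastur law with ratio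
index `y ∈ (0,1)` and scale 1 equals `1 + ((1-y)/y) * log (1-y)`. -/
theorem mp_integral_g (y : ℝ) (hy : y ∈ Set.Ioo (0 : ℝ) 1) :
    (∫ x in ((1 - Real.sqrt y) ^ 2)..((1 + Real.sqrt y) ^ 2),
        (x - Real.log x - 1) * mpDensity y x)
      = 1 + ((1 - y) / y) * Real.log (1 - y) := by
  obtain ⟨hy0, hy1⟩ := hy
  set s : ℝ := Real.sqrt y with hs
  have hsy : s ^ 2 = y := Real.sq_sqrt hy0.le
  have hs0 : 0 < s := Real.sqrt_pos.mpr hy0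
  have hs1 : s < 1 := by
    rw [hs, show (1:ℝ) = Real.sqrt 1 by simp]
    exact Real.sqrt_lt_sqrt hy0.le hy1
  have hπ : (0:ℝ) < π := Real.pi_pos
  set f : ℝ → ℝ := fun θ => 1 - 2 * s * Real.cos θ + s ^ 2 with hf
  have hxpos : ∀ θ, 0 < f θ := fun θ => MPaux.xpos hs0.le hs1 θ
  have hderiv : ∀ θ ∈ Set.uIcc (0:ℝ) π, HasDerivAt f (2 * s * Real.sin θ) θ := by
    intro θ _
    have h1 : HasDerivAt (fun t : ℝ => 1 - 2 * s * Real.cos t + s ^ 2)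
        (0 - 2 * s * (-Real.sin θ) + 0) θ := by
      exact (((hasDerivAt_const θ 1).sub ((Real.hasDerivAt_cos θ).const_mul (2*s))).add
        (hasDerivAt_const θ (s^2)))
    convert h1 using 1
    ring
  have hcont' : ContinuousOn (fun θ : ℝ => 2 * s * Real.sin θ) (Set.uIcc 0 π) := by fun_prop
  have hgcont : ContinuousOn (fun x => (x - Real.log x - 1) * mpDensity y x)
      (f '' Set.uIcc 0 π) := by
    intro x hx
    obtain ⟨θ, _, rfl⟩ := hx
    have hxp : 0 < f θ := hxpos θ
    apply ContinuousAt.continuousWithinAt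
    apply ContinuousAt.mul
    · exact (continuousAt_id.sub (Real.continuousAt_log hxp.ne')).sub continuousAt_const
    · unfold mpDensity
      apply ContinuousAt.mul
      · apply ContinuousAt.div continuousAt_const
        · fun_prop
        · positivity
      · apply Real.continuous_sqrt.continuousAt.comp
        fun_prop
  have hsub := intervalIntegral.integral_comp_smul_deriv' hderiv hcont' hgcont
  have hf0 : f 0 = (1 - s) ^ 2 := by
    simp only [hf, Real.cos_zero]
    ring
  have hfπ : f π = (1 + s) ^ 2 := by
    simp only [hf, Real.cos_pi]
    ring
  rw [hf0, hfπ] at hsub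
  rw [← hs] at *
  rw [← hsub]
  -- now rewrite the θ-integrand
  have hpt : ∀ θ ∈ Set.uIcc (0:ℝ) π,
      (2 * s * Real.sin θ) • ((fun x => (x - Real.log x - 1) * mpDensity y x) ∘ f) θ
        = (2 / π) * ((f θ - Real.log (f θ) - 1) * Real.sin θ ^ 2 / f θ) := by
    intro θ hθ
    rw [Set.uIcc_of_le hπ.le] at hθ
    have hsin : 0 ≤ Real.sin θ := Real.sin_nonneg_of_nonneg_of_le_pi hθ.1 hθ.2
    simp only [Function.comp, smul_eq_mul]
    unfold mpDensity
    have h1 : ((1 + s) ^ 2 - f θ) * (f θ - (1 - s) ^ 2) = (2 * s * Real.sin θ) ^ 2 := by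
      simp only [hf]
      nlinarith [Real.sin_sq_add_cos_sq θ]
    rw [h1, Real.sqrt_sq (by positivity)]
    have hxp : f θ ≠ 0 := (hxpos θ).ne'
    have hy0' : y ≠ 0 := hy0.ne'
    rw [← hsy]
    have hs0' : s ≠ 0 := hs0.ne'
    field_simp
  rw [intervalIntegral.integral_congr hpt]
  -- split the integral
  have hxcont : Continuous f := by
    rw [hf]; fun_prop
  have hxne : ∀ θ, f θ ≠ 0 := fun θ => (hxpos θ).ne'
  have c1 : Continuous fun θ : ℝ => Real.sin θ ^ 2 := by fun_prop
  have c2 : Continuous fun θ : ℝ => Real.sin θ ^ 2 / f θ := c1.div hxcont hxne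
  have clog : Continuous fun θ : ℝ => Real.log (f θ) := by
    rw [continuous_iff_continuousAt]
    intro θ
    exact (Real.continuousAt_log (hxne θ)).comp hxcont.continuousAt
  have c3 : Continuous fun θ : ℝ => Real.log (f θ) * Real.sin θ ^ 2 / f θ :=
    (clog.mul c1).div hxcont hxne
  have hsplit : ∀ θ ∈ Set.uIcc (0:ℝ) π,
      (2 / π) * ((f θ - Real.log (f θ) - 1) * Real.sin θ ^ 2 / f θ)
        = (2 / π) * (Real.sin θ ^ 2) - (2 / π) * (Real.log (f θ) * Real.sin θ ^ 2 / f θ)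
          - (2 / π) * (Real.sin θ ^ 2 / f θ) := by
    intro θ _
    have := hxne θ
    field_simp
  rw [intervalIntegral.integral_congr hsplit]
  rw [intervalIntegral.integral_sub (f := fun θ : ℝ => (2 / π) * (Real.sin θ ^ 2) - (2 / π) * (Real.log (f θ) * Real.sin θ ^ 2 / f θ)) (g := fun θ : ℝ => (2 / π) * (Real.sin θ ^ 2 / f θ))
      (((continuous_const.mul c1).sub (continuous_const.mul c3)).intervalIntegrable 0 π)
      ((continuous_const.mul c2).intervalIntegrable 0 π),
    intervalIntegral.integral_sub (f := fun θ : ℝ => (2 / π) * (Real.sin θ ^ 2)) (g := fun θ : ℝ => (2 / π) * (Real.log (f θ) * Real.sin θ ^ 2 / f θ))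
      ((continuous_const.mul c1).intervalIntegrable 0 π)
      ((continuous_const.mul c3).intervalIntegrable 0 π),
    intervalIntegral.integral_const_mul, intervalIntegral.integral_const_mul,
    intervalIntegral.integral_const_mul]
  have hsin2 : (∫ θ in (0:ℝ)..π, Real.sin θ ^ 2) = π / 2 := by
    rw [integral_sin_sq]
    simp
  have hJ := MPaux.J hs0 hs1
  have ha0 := MPaux.a0 hs0.le hs1
  simp only [hf] at *
  rw [hsin2, hJ, ha0, hsy]
  field_simp
  ring
end

section
/- Let A and B be p×p real symmetric positive semidefinite matrices with eigenvalues λ₁(A) ≥ … ≥ λ_p(A) and λ₁(B) ≥ … ≥ λ_p(B). If f : ℝ → ℝ is Lipschitz with constant C on an interval containing all eigenvalues of A and B, then |∑_{i=1}^p (f(λ_i(A)) − f(λ_i(B)))| ≤ C · √(2p·(λ_max(A)+λ_max(B))) · √(∑_{i=1}^p (√λ_i(A) − √λ_i(B))²). -/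
open Real Matrix

/-- Lipschitz eigenvalue-sum bound: for symmetric PSD matrices `A`, `B` with eigenvalues
listed in decreasing order and a function `f` Lipschitz with constant `C` on an interval
containing all eigenvalues,
`|∑ (f(λᵢ(A)) - f(λᵢ(B)))| ≤ C √(2p(λmax(A)+λmax(B))) √(∑ (√λᵢ(A) - √λᵢ(B))²)`. -/
theorem lipschitz_eigenvalue_sum_bound (p : ℕ) (hp : 0 < p)
    (A B : Matrix (Fin p) (Fin p) ℝ) (hA : A.PosSemidef) (hB : B.PosSemidef)
    (lamA lamB : Fin p → ℝ)
    (hlamA : ∃ e : Equiv.Perm (Fin p), lamA = hA.1.eigenvalues ∘ e)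
    (hlamB : ∃ e : Equiv.Perm (Fin p), lamB = hB.1.eigenvalues ∘ e)
    (hmonoA : Antitone lamA) (hmonoB : Antitone lamB)
    (I : Set ℝ) (hIconn : I.OrdConnected)
    (hI : ∀ i, lamA i ∈ I ∧ lamB i ∈ I)
    (f : ℝ → ℝ) (C : ℝ) (hC : 0 ≤ C)
    (hf : ∀ x ∈ I, ∀ y ∈ I, |f x - f y| ≤ C * |x - y|) :
    |∑ i, (f (lamA i) - f (lamB i))| ≤
      C * Real.sqrt (2 * p * (lamA ⟨0, hp⟩ + lamB ⟨0, hp⟩)) *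
        Real.sqrt (∑ i, (Real.sqrt (lamA i) - Real.sqrt (lamB i)) ^ 2) := by
  obtain ⟨eA, hEA⟩ := hlamA
  obtain ⟨eB, hEB⟩ := hlamB
  have hAnn : ∀ i, 0 ≤ lamA i := fun i => by
    rw [hEA]; exact hA.eigenvalues_nonneg _
  have hBnn : ∀ i, 0 ≤ lamB i := fun i => by
    rw [hEB]; exact hB.eigenvalues_nonneg _
  set a : Fin p → ℝ := fun i => Real.sqrt (lamA i) with ha
  set b : Fin p → ℝ := fun i => Real.sqrt (lamB i) with hb
  have ha2 : ∀ i, a i ^ 2 = lamA i := fun i => Real.sq_sqrt (hAnn i)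
  have hb2 : ∀ i, b i ^ 2 = lamB i := fun i => Real.sq_sqrt (hBnn i)
  have hann : ∀ i, 0 ≤ a i := fun i => Real.sqrt_nonneg _
  have hbnn : ∀ i, 0 ≤ b i := fun i => Real.sqrt_nonneg _
  have hle : ∀ i : Fin p, (⟨0, hp⟩ : Fin p) ≤ i := fun i => by
    exact Fin.mk_le_of_le_val (Nat.zero_le _)
  set M := 2 * (lamA ⟨0, hp⟩ + lamB ⟨0, hp⟩) with hM
  have hMnn : 0 ≤ M := by
    have := hAnn ⟨0, hp⟩; have := hBnn ⟨0, hp⟩; positivity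
  have hbound : ∀ i, (a i + b i) ^ 2 ≤ M := by
    intro i
    have h1 : (a i + b i) ^ 2 ≤ 2 * (a i ^ 2 + b i ^ 2) := by
      nlinarith [sq_nonneg (a i - b i)]
    have h2 : lamA i ≤ lamA ⟨0, hp⟩ := hmonoA (hle i)
    have h3 : lamB i ≤ lamB ⟨0, hp⟩ := hmonoB (hle i)
    rw [ha2, hb2] at h1; rw [hM]; linarith
  have step1 : |∑ i, (f (lamA i) - f (lamB i))| ≤
      C * ∑ i, (a i + b i) * |a i - b i| := by
    calc |∑ i, (f (lamA i) - f (lamB i))|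
        ≤ ∑ i, |f (lamA i) - f (lamB i)| := Finset.abs_sum_le_sum_abs _ _
      _ ≤ ∑ i, C * |lamA i - lamB i| :=
          Finset.sum_le_sum fun i _ => hf _ (hI i).1 _ (hI i).2
      _ = C * ∑ i, (a i + b i) * |a i - b i| := by
          rw [Finset.mul_sum]
          refine Finset.sum_congr rfl fun i _ => ?_
          have h : lamA i - lamB i = (a i + b i) * (a i - b i) := by
            rw [← ha2 i, ← hb2 i]; ring
          rw [h, abs_mul, abs_of_nonneg (by positivity)]
  have cauchy : (∑ i, (a i + b i) * |a i - b i|) ^ 2 ≤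
      (∑ i, (a i + b i) ^ 2) * (∑ i, (a i - b i) ^ 2) := by
    have h := Finset.sum_mul_sq_le_sq_mul_sq Finset.univ
      (fun i => a i + b i) (fun i => |a i - b i|)
    simpa [sq_abs] using h
  have hsum1 : (∑ i, (a i + b i) ^ 2) ≤ 2 * p * (lamA ⟨0, hp⟩ + lamB ⟨0, hp⟩) := by
    calc (∑ i, (a i + b i) ^ 2) ≤ ∑ _i : Fin p, M :=
          Finset.sum_le_sum fun i _ => hbound i
      _ = p * M := by simp [mul_comm]
      _ = 2 * p * (lamA ⟨0, hp⟩ + lamB ⟨0, hp⟩) := by rw [hM]; ring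
  have hstep2 : (∑ i, (a i + b i) * |a i - b i|) ≤
      Real.sqrt (2 * p * (lamA ⟨0, hp⟩ + lamB ⟨0, hp⟩)) *
        Real.sqrt (∑ i, (a i - b i) ^ 2) := by
    have hnn : 0 ≤ ∑ i, (a i + b i) * |a i - b i| :=
      Finset.sum_nonneg fun i _ => mul_nonneg (by positivity) (abs_nonneg _)
    rw [← Real.sqrt_mul_self hnn, ← Real.sqrt_mul (by have h1 := hAnn ⟨0, hp⟩; have h2 := hBnn ⟨0, hp⟩; positivity)]
    apply Real.sqrt_le_sqrt
    calc (∑ i, (a i + b i) * |a i - b i|) * (∑ i, (a i + b i) * |a i - b i|)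
        = (∑ i, (a i + b i) * |a i - b i|) ^ 2 := by ring
      _ ≤ (∑ i, (a i + b i) ^ 2) * (∑ i, (a i - b i) ^ 2) := cauchy
      _ ≤ (2 * p * (lamA ⟨0, hp⟩ + lamB ⟨0, hp⟩)) * (∑ i, (a i - b i) ^ 2) := by
          apply mul_le_mul_of_nonneg_right hsum1
          exact Finset.sum_nonneg fun i _ => sq_nonneg _
  calc |∑ i, (f (lamA i) - f (lamB i))|
      ≤ C * ∑ i, (a i + b i) * |a i - b i| := step1
    _ ≤ C * (Real.sqrt (2 * p * (lamA ⟨0, hp⟩ + lamB ⟨0, hp⟩)) *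
        Real.sqrt (∑ i, (a i - b i) ^ 2)) := mul_le_mul_of_nonneg_left hstep2 hC
    _ = _ := by rw [← mul_assoc]
end

section
/- Let F and G be the empirical spectral distributions of the p×p matrices UUᵀ and VVᵀ, where U, V are p×k real matrices. Then the fourth power of the Lévy distance satisfies L(F,G)⁴ ≤ (2/p²)·tr((U−V)(U−V)ᵀ)·tr(UUᵀ + VVᵀ). -/
open Real Matrix

/-- Lévy distance between two distribution functions. -/
noncomputable def levyDist (F G : ℝ → ℝ) : ℝ :=
  sInf {ε : ℝ | 0 < ε ∧ ∀ x, F (x - ε) - ε ≤ G x ∧ G x ≤ F (x + ε) + ε}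

/-- Empirical spectral distribution function of a list of `p` eigenvalues. -/
noncomputable def esd {p : ℕ} (lam : Fin p → ℝ) : ℝ → ℝ := fun x =>
  (1 / (p : ℝ)) * (Finset.univ.filter fun i => lam i ≤ x).card

namespace BaiAux

open scoped RealInnerProductSpace

variable {p k : ℕ}

lemma trace_mul_transpose_nonneg (M : Matrix (Fin p) (Fin k) ℝ) :
    0 ≤ Matrix.trace (M * Mᵀ) := by
  have : Matrix.trace (M * Mᵀ) = ∑ j, ∑ q, M j q ^ 2 := by
    simp [Matrix.trace, Matrix.mul_apply, Matrix.diag, sq]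
  rw [this]; positivity

lemma inner_eq {n : ℕ} (x y : EuclideanSpace ℝ (Fin n)) :
    ⟪x, y⟫ = ∑ i, x i * y i := by
  simp [PiLp.inner_apply, RCLike.inner_apply, conj_trivial]
  exact Finset.sum_congr rfl fun _ _ => mul_comm _ _

lemma norm_sq_eq {n : ℕ} (x : EuclideanSpace ℝ (Fin n)) :
    ‖x‖ ^ 2 = ∑ i, x i ^ 2 := by
  rw [← real_inner_self_eq_norm_sq, inner_eq]; simp [sq]

lemma bessel_trace {d : ℕ} (f : Fin d → EuclideanSpace ℝ (Fin p))
    (hf : Orthonormal ℝ f) (M : Matrix (Fin p) (Fin k) ℝ) :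
    ∑ i, ‖Matrix.toEuclideanLin Mᵀ (f i)‖ ^ 2 ≤ Matrix.trace (M * Mᵀ) := by
  classical
  set col : Fin k → EuclideanSpace ℝ (Fin p) :=
    fun q => (WithLp.equiv 2 (Fin p → ℝ)).symm (fun j => M j q) with hcol
  have happ : ∀ (i : Fin d) (q : Fin k),
      (Matrix.toEuclideanLin Mᵀ (f i)) q = ⟪col q, f i⟫ := by
    intro i q
    rw [Matrix.toEuclideanLin_apply, inner_eq]
    simp [Matrix.mulVec, dotProduct, hcol, mul_comm]
  have h1 : ∀ i, ‖Matrix.toEuclideanLin Mᵀ (f i)‖ ^ 2 = ∑ q, ⟪col q, f i⟫ ^ 2 := by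
    intro i; rw [norm_sq_eq]
    exact Finset.sum_congr rfl fun q _ => by rw [happ]
  calc ∑ i, ‖Matrix.toEuclideanLin Mᵀ (f i)‖ ^ 2
      = ∑ q, ∑ i, ⟪col q, f i⟫ ^ 2 := by
        rw [← Finset.sum_comm]; exact Finset.sum_congr rfl fun i _ => h1 i
    _ ≤ ∑ q, ‖col q‖ ^ 2 := by
        refine Finset.sum_le_sum fun q _ => ?_
        have := hf.sum_inner_products_le (col q) (s := Finset.univ)
        simpa [inner_eq, mul_comm, sq_abs] using this
    _ = Matrix.trace (M * Mᵀ) := by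
        have h2 : ∀ q, ‖col q‖ ^ 2 = ∑ j, M j q ^ 2 := by
          intro q; rw [norm_sq_eq]; simp [hcol]
        have h3 : Matrix.trace (M * Mᵀ) = ∑ j, ∑ q, M j q ^ 2 := by
          simp [Matrix.trace, Matrix.mul_apply, Matrix.diag, sq]
        rw [h3, Finset.sum_comm]
        exact Finset.sum_congr rfl fun q _ => h2 q

lemma quad_mul_transpose (M : Matrix (Fin p) (Fin k) ℝ) (v : EuclideanSpace ℝ (Fin p)) :
    ⟪v, Matrix.toEuclideanLin (M * Mᵀ) v⟫ = ‖Matrix.toEuclideanLin Mᵀ v‖ ^ 2 := by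
  rw [inner_eq, norm_sq_eq]
  have h1 : ∀ j, (Matrix.toEuclideanLin (M * Mᵀ) v) j = ((M * Mᵀ) *ᵥ ⇑v) j := by
    intro j; rw [Matrix.toEuclideanLin_apply]
  have h2 : ∀ q, (Matrix.toEuclideanLin Mᵀ v) q = (Mᵀ *ᵥ ⇑v) q := by
    intro q; rw [Matrix.toEuclideanLin_apply]
  simp only [h1, h2]
  have : (⇑v) ⬝ᵥ ((M * Mᵀ) *ᵥ ⇑v) = (Mᵀ *ᵥ ⇑v) ⬝ᵥ (Mᵀ *ᵥ ⇑v) := by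
    rw [← Matrix.mulVec_mulVec, Matrix.dotProduct_mulVec]
    congr 1
    rw [← Matrix.transpose_transpose M, Matrix.vecMul_transpose, Matrix.transpose_transpose]
  simpa [dotProduct, sq] using this

lemma triangle_norms (X Y : Matrix (Fin p) (Fin k) ℝ) (v : EuclideanSpace ℝ (Fin p)) :
    ‖Matrix.toEuclideanLin Yᵀ v‖ ≤
      ‖Matrix.toEuclideanLin Xᵀ v‖ + ‖Matrix.toEuclideanLin (X - Y)ᵀ v‖ := by
  have : Matrix.toEuclideanLin Yᵀ v
      = Matrix.toEuclideanLin Xᵀ v - Matrix.toEuclideanLin (X - Y)ᵀ v := by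
    rw [← LinearMap.sub_apply, ← map_sub (Matrix.toEuclideanLin) , ← Matrix.transpose_sub,
      sub_sub_cancel]
  rw [this]
  exact norm_sub_le _ _

variable {A : Matrix (Fin p) (Fin p) ℝ} (hA : A.IsHermitian)

lemma toEuclideanLin_eigenvector (i : Fin p) :
    Matrix.toEuclideanLin A (hA.eigenvectorBasis i)
      = hA.eigenvalues i • hA.eigenvectorBasis i := by
  apply (WithLp.equiv 2 (Fin p → ℝ)).injective
  change A *ᵥ (WithLp.equiv 2 (Fin p → ℝ)) (hA.eigenvectorBasis i) = _
  have := hA.mulVec_eigenvectorBasis i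
  simpa using this

lemma quad_eq_sum (v : EuclideanSpace ℝ (Fin p)) :
    ⟪v, Matrix.toEuclideanLin A v⟫
      = ∑ i, hA.eigenvalues i * (hA.eigenvectorBasis.repr v i) ^ 2 := by
  set e := hA.eigenvectorBasis
  have hS : (Matrix.toEuclideanLin A).IsSymmetric :=
    (Matrix.isHermitian_iff_isSymmetric).1 hA
  nth_rewrite 1 [← e.sum_repr v]
  rw [sum_inner]
  refine Finset.sum_congr rfl fun i _ => ?_
  rw [real_inner_smul_left, ← hS (e i) v, toEuclideanLin_eigenvector hA i,
    real_inner_smul_left, e.repr_apply_apply]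
  ring

lemma parseval (v : EuclideanSpace ℝ (Fin p)) :
    ‖v‖ ^ 2 = ∑ i, (hA.eigenvectorBasis.repr v i) ^ 2 := by
  have h1 : ‖v‖ = ‖hA.eigenvectorBasis.repr v‖ := (hA.eigenvectorBasis.repr.norm_map v).symm
  rw [h1, ← real_inner_self_eq_norm_sq, PiLp.inner_apply]
  refine Finset.sum_congr rfl fun i _ => ?_
  simp [RCLike.inner_apply, conj_trivial, sq]

lemma repr_vanish (J : Finset (Fin p)) (v : EuclideanSpace ℝ (Fin p))
    (hv : v ∈ Submodule.span ℝ (⇑hA.eigenvectorBasis '' ↑J)) {i : Fin p} (hi : i ∉ J) :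
    hA.eigenvectorBasis.repr v i = 0 := by
  set e := hA.eigenvectorBasis
  rw [e.repr_apply_apply]
  have : v ∈ LinearMap.ker ((innerSL ℝ (e i)) : _ →ₗ[ℝ] ℝ) := by
    refine Submodule.span_le.2 ?_ hv
    rintro w ⟨j, hj, rfl⟩
    have hne : i ≠ j := fun h => hi (h ▸ hj)
    simp only [SetLike.mem_coe, LinearMap.mem_ker, ContinuousLinearMap.coe_coe, innerSL_apply_apply]
    exact e.orthonormal.2 hne
  simpa using this

lemma span_finrank (J : Finset (Fin p)) :
    Module.finrank ℝ (Submodule.span ℝ (⇑hA.eigenvectorBasis '' ↑J)) = J.card := by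
  classical
  set e := hA.eigenvectorBasis
  have li : LinearIndependent ℝ ⇑e := by
    have := e.toBasis.linearIndependent
    rwa [OrthonormalBasis.coe_toBasis] at this
  have li2 : LinearIndependent ℝ ((↑) : (⇑e '' ↑J) → EuclideanSpace ℝ (Fin p)) :=
    (LinearIndependent.linearIndepOn_id li).mono (Set.image_subset_range _ _)
  have := finrank_span_set_eq_card (s := ⇑e '' ↑J) li2
  rw [this, Set.toFinset_image]
  simp [Finset.card_image_of_injective _ li.injective]

lemma sum_repr_sq_on_span (J : Finset (Fin p)) (v : EuclideanSpace ℝ (Fin p))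
    (hv : v ∈ Submodule.span ℝ (⇑hA.eigenvectorBasis '' ↑J)) (hn : ‖v‖ = 1) :
    ∑ i ∈ J, (hA.eigenvectorBasis.repr v i) ^ 2 = 1 := by
  have h2 : ∑ i ∈ J, (hA.eigenvectorBasis.repr v i) ^ 2
      = ∑ i, (hA.eigenvectorBasis.repr v i) ^ 2 :=
    Finset.sum_subset (Finset.subset_univ J)
      (fun i _ hi => by rw [repr_vanish hA J v hv hi]; ring)
  rw [h2, ← parseval hA v, hn, one_pow]

lemma quad_le_on_span (J : Finset (Fin p)) (c : ℝ)
    (hJ : ∀ i ∈ J, hA.eigenvalues i ≤ c) (v : EuclideanSpace ℝ (Fin p))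
    (hv : v ∈ Submodule.span ℝ (⇑hA.eigenvectorBasis '' ↑J)) (hn : ‖v‖ = 1) :
    ⟪v, Matrix.toEuclideanLin A v⟫ ≤ c := by
  rw [quad_eq_sum hA v]
  have h1 : ∑ i, hA.eigenvalues i * (hA.eigenvectorBasis.repr v i) ^ 2
      = ∑ i ∈ J, hA.eigenvalues i * (hA.eigenvectorBasis.repr v i) ^ 2 :=
    (Finset.sum_subset (Finset.subset_univ J)
      (fun i _ hi => by rw [repr_vanish hA J v hv hi]; ring)).symm
  rw [h1]
  calc ∑ i ∈ J, hA.eigenvalues i * (hA.eigenvectorBasis.repr v i) ^ 2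
      ≤ ∑ i ∈ J, c * (hA.eigenvectorBasis.repr v i) ^ 2 :=
        Finset.sum_le_sum fun i hi =>
          mul_le_mul_of_nonneg_right (hJ i hi) (sq_nonneg _)
    _ = c := by rw [← Finset.mul_sum, sum_repr_sq_on_span hA J v hv hn, mul_one]

lemma quad_ge_on_span (J : Finset (Fin p)) (c : ℝ)
    (hJ : ∀ i ∈ J, c ≤ hA.eigenvalues i) (v : EuclideanSpace ℝ (Fin p))
    (hv : v ∈ Submodule.span ℝ (⇑hA.eigenvectorBasis '' ↑J)) (hn : ‖v‖ = 1) :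
    c ≤ ⟪v, Matrix.toEuclideanLin A v⟫ := by
  rw [quad_eq_sum hA v]
  have h1 : ∑ i, hA.eigenvalues i * (hA.eigenvectorBasis.repr v i) ^ 2
      = ∑ i ∈ J, hA.eigenvalues i * (hA.eigenvectorBasis.repr v i) ^ 2 :=
    (Finset.sum_subset (Finset.subset_univ J)
      (fun i _ hi => by rw [repr_vanish hA J v hv hi]; ring)).symm
  rw [h1]
  calc c = ∑ i ∈ J, c * (hA.eigenvectorBasis.repr v i) ^ 2 := by
        rw [← Finset.mul_sum, sum_repr_sq_on_span hA J v hv hn, mul_one]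
    _ ≤ _ := Finset.sum_le_sum fun i hi =>
        mul_le_mul_of_nonneg_right (hJ i hi) (sq_nonneg _)

lemma key (U V : Matrix (Fin p) (Fin k) ℝ) (hA : (U * Uᵀ).IsHermitian)
    (hB : (V * Vᵀ).IsHermitian) (x ε : ℝ) (hε : 0 < ε) :
    ε * (((Finset.univ.filter fun i => hA.eigenvalues i ≤ x).card : ℝ)
        - ((Finset.univ.filter fun j => hB.eigenvalues j ≤ x + ε).card : ℝ))
      ≤ Real.sqrt (Matrix.trace ((U - V) * (U - V)ᵀ)) *
          Real.sqrt (2 * Matrix.trace (U * Uᵀ + V * Vᵀ)) := by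
  classical
  set JA := Finset.univ.filter fun i => hA.eigenvalues i ≤ x with hJA
  set JB := Finset.univ.filter fun j => ¬ hB.eigenvalues j ≤ x + ε with hJB
  have hcard : (Finset.univ.filter fun j => hB.eigenvalues j ≤ x + ε).card + JB.card = p := by
    rw [hJB, Finset.card_filter_add_card_filter_not]; simp
  set S := Submodule.span ℝ (⇑hA.eigenvectorBasis '' ↑JA) with hS
  set T := Submodule.span ℝ (⇑hB.eigenvectorBasis '' ↑JB) with hT
  set d := Module.finrank ℝ ↥(S ⊓ T) with hd
  have hdim : JA.card + JB.card ≤ p + d := by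
    have h1 := Submodule.finrank_sup_add_finrank_inf_eq S T
    have h2 : Module.finrank ℝ ↥(S ⊔ T) ≤ p := by
      refine le_trans (Submodule.finrank_le _) ?_
      simp [finrank_euclideanSpace]
    rw [span_finrank hA JA, span_finrank hB JB] at h1
    omega
  set b := stdOrthonormalBasis ℝ ↥(S ⊓ T) with hb
  set f : Fin d → EuclideanSpace ℝ (Fin p) :=
    fun i => ((b i : ↥(S ⊓ T)) : EuclideanSpace ℝ (Fin p)) with hfdef
  have hf : Orthonormal ℝ f := by
    rw [orthonormal_iff_ite]
    intro i j
    rw [hfdef]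
    dsimp only
    rw [← Submodule.coe_inner, orthonormal_iff_ite.1 b.orthonormal]
  have hnorm1 : ∀ i, ‖f i‖ = 1 := fun i => hf.1 i
  have hmemS : ∀ i, f i ∈ S := fun i => (Submodule.mem_inf.1 (b i).2).1
  have hmemT : ∀ i, f i ∈ T := fun i => (Submodule.mem_inf.1 (b i).2).2
  set α : Fin d → ℝ := fun i => ‖Matrix.toEuclideanLin Uᵀ (f i)‖ with hα
  set β : Fin d → ℝ := fun i => ‖Matrix.toEuclideanLin Vᵀ (f i)‖ with hβ
  set γ : Fin d → ℝ := fun i => ‖Matrix.toEuclideanLin (U - V)ᵀ (f i)‖ with hγ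
  have hstep : ∀ i, ε ≤ γ i * (α i + β i) := by
    intro i
    have hub : ⟪f i, Matrix.toEuclideanLin (U * Uᵀ) (f i)⟫ ≤ x :=
      quad_le_on_span hA JA x (fun i hi => (Finset.mem_filter.1 hi).2) (f i) (hmemS i)
        (hnorm1 i)
    have hlb : x + ε ≤ ⟪f i, Matrix.toEuclideanLin (V * Vᵀ) (f i)⟫ :=
      quad_ge_on_span hB JB (x + ε)
        (fun j hj => (not_le.1 (Finset.mem_filter.1 hj).2).le) (f i) (hmemT i) (hnorm1 i)
    rw [quad_mul_transpose] at hub hlb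
    have htri : β i ≤ α i + γ i := triangle_norms U V (f i)
    have h0a : 0 ≤ α i := norm_nonneg _
    have h0b : 0 ≤ β i := norm_nonneg _
    have h0g : 0 ≤ γ i := norm_nonneg _
    nlinarith [sq_nonneg (α i + β i)]
  set trD := Matrix.trace ((U - V) * (U - V)ᵀ) with htrD
  set trU := Matrix.trace (U * Uᵀ) with htrU
  set trV := Matrix.trace (V * Vᵀ) with htrV
  have hsum : ε * d ≤ ∑ i, γ i * (α i + β i) := by
    calc ε * d = ∑ _i : Fin d, ε := by
          rw [Finset.sum_const, Finset.card_univ, Fintype.card_fin, nsmul_eq_mul, mul_comm]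
      _ ≤ _ := Finset.sum_le_sum fun i _ => hstep i
  have hg2 : ∑ i, γ i ^ 2 ≤ trD := by
    simpa [hγ, htrD] using bessel_trace f hf (U - V)
  have hab2 : ∑ i, (α i + β i) ^ 2 ≤ 2 * (trU + trV) := by
    have hu : ∑ i, α i ^ 2 ≤ trU := by simpa [hα] using bessel_trace f hf U
    have hv : ∑ i, β i ^ 2 ≤ trV := by simpa [hβ] using bessel_trace f hf V
    have h3 : ∑ i, (α i + β i) ^ 2 ≤ ∑ i, (2 * α i ^ 2 + 2 * β i ^ 2) :=
      Finset.sum_le_sum fun i _ => by nlinarith [sq_nonneg (α i - β i)]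
    rw [Finset.sum_add_distrib, ← Finset.mul_sum, ← Finset.mul_sum] at h3
    linarith
  have htrD0 : 0 ≤ trD := trace_mul_transpose_nonneg _
  have hcs : (∑ i, γ i * (α i + β i)) ^ 2 ≤ trD * (2 * (trU + trV)) := by
    refine le_trans (Finset.sum_mul_sq_le_sq_mul_sq Finset.univ γ (fun i => α i + β i)) ?_
    have h2 : 0 ≤ ∑ i, (α i + β i) ^ 2 := Finset.sum_nonneg fun i _ => sq_nonneg _
    exact mul_le_mul hg2 hab2 h2 htrD0
  have hsnn : 0 ≤ ∑ i, γ i * (α i + β i) :=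
    Finset.sum_nonneg fun i _ => mul_nonneg (norm_nonneg _)
      (add_nonneg (norm_nonneg _) (norm_nonneg _))
  have hfinal : ∑ i, γ i * (α i + β i) ≤ Real.sqrt trD * Real.sqrt (2 * (trU + trV)) := by
    rw [← Real.sqrt_mul htrD0]
    calc ∑ i, γ i * (α i + β i) = Real.sqrt ((∑ i, γ i * (α i + β i)) ^ 2) :=
          (Real.sqrt_sq hsnn).symm
      _ ≤ _ := Real.sqrt_le_sqrt hcs
  have htr_add : Matrix.trace (U * Uᵀ + V * Vᵀ) = trU + trV := by
    rw [Matrix.trace_add]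
  rw [htr_add]
  have hcount : ((JA.card : ℝ)
      - ((Finset.univ.filter fun j => hB.eigenvalues j ≤ x + ε).card : ℝ)) ≤ d := by
    have h1 : (JA.card : ℝ) + JB.card ≤ p + d := by exact_mod_cast hdim
    have h2 : ((Finset.univ.filter fun j => hB.eigenvalues j ≤ x + ε).card : ℝ) + JB.card
        = p := by exact_mod_cast hcard
    linarith
  calc ε * (((JA.card : ℝ))
        - ((Finset.univ.filter fun j => hB.eigenvalues j ≤ x + ε).card : ℝ))
      ≤ ε * d := mul_le_mul_of_nonneg_left hcount hε.le
    _ ≤ ∑ i, γ i * (α i + β i) := hsum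
    _ ≤ _ := hfinal

end BaiAux

/-- Bai's Lemma 2.7: for the ESDs `F`, `G` of `UUᵀ` and `VVᵀ`,
`L(F,G)⁴ ≤ (2/p²)·tr((U-V)(U-V)ᵀ)·tr(UUᵀ + VVᵀ)`. -/
theorem levy_distance_fourth_power_bound (p k : ℕ) (U V : Matrix (Fin p) (Fin k) ℝ)
    (hA : (U * Uᵀ).IsHermitian) (hB : (V * Vᵀ).IsHermitian) :
    (levyDist (esd hA.eigenvalues) (esd hB.eigenvalues)) ^ 4 ≤
      (2 / (p : ℝ) ^ 2) * Matrix.trace ((U - V) * (U - V)ᵀ) *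
        Matrix.trace (U * Uᵀ + V * Vᵀ) := by
  classical
  set F := esd hA.eigenvalues with hF
  set G := esd hB.eigenvalues with hG
  set trD := Matrix.trace ((U - V) * (U - V)ᵀ) with htrD
  set trS := Matrix.trace (U * Uᵀ + V * Vᵀ) with htrS
  have htrD0 : 0 ≤ trD := BaiAux.trace_mul_transpose_nonneg _
  have htrS0 : 0 ≤ trS := by
    rw [htrS, Matrix.trace_add]
    exact add_nonneg (BaiAux.trace_mul_transpose_nonneg U)
      (BaiAux.trace_mul_transpose_nonneg V)
  set R := (2 / (p : ℝ) ^ 2) * trD * trS with hR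
  have hR0 : 0 ≤ R := by positivity
  set ε₀ := Real.sqrt (Real.sqrt R) with hε₀
  have hε₀0 : 0 ≤ ε₀ := Real.sqrt_nonneg _
  have hε₀sq : ε₀ ^ 2 = Real.sqrt R := Real.sq_sqrt (Real.sqrt_nonneg _)
  have hε₀4 : ε₀ ^ 4 = R := by
    have h4 : ε₀ ^ 4 = (ε₀ ^ 2) ^ 2 := by ring
    rw [h4, hε₀sq, Real.sq_sqrt hR0]
  set C := Real.sqrt trD * Real.sqrt (2 * trS) with hC
  have hCle : C ≤ (p : ℝ) * ε₀ ^ 2 := by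
    rcases Nat.eq_zero_or_pos p with hp | hp
    · subst hp
      have hD : trD = 0 := by simp [htrD, Matrix.trace]
      have hS' : trS = 0 := by simp [htrS, Matrix.trace]
      simp [hC, hD, hS']
    · have hp0 : (0 : ℝ) < p := by exact_mod_cast hp
      have h1 : (p : ℝ) * ε₀ ^ 2 = Real.sqrt ((p : ℝ) ^ 2 * R) := by
        rw [hε₀sq, Real.sqrt_mul (sq_nonneg _), Real.sqrt_sq hp0.le]
      have h2 : (p : ℝ) ^ 2 * R = trD * (2 * trS) := by
        rw [hR]; field_simp
      rw [h1, h2, hC, Real.sqrt_mul htrD0]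
  have hmem : ∀ ε', ε₀ < ε' →
      ε' ∈ {ε : ℝ | 0 < ε ∧ ∀ x, F (x - ε) - ε ≤ G x ∧ G x ≤ F (x + ε) + ε} := by
    intro ε' hε'
    have hε'pos : 0 < ε' := lt_of_le_of_lt hε₀0 hε'
    refine ⟨hε'pos, fun x => ?_⟩
    rcases Nat.eq_zero_or_pos p with hp | hp
    · subst hp
      have hF0 : ∀ y, F y = 0 := fun y => by simp [hF, esd]
      have hG0 : ∀ y, G y = 0 := fun y => by simp [hG, esd]
      rw [hF0, hF0, hG0]
      constructor <;> linarith
    · have hp0 : (0 : ℝ) < p := by exact_mod_cast hp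
      have hCe : C ≤ (p : ℝ) * ε' ^ 2 := by
        refine le_trans hCle ?_
        have : ε₀ ^ 2 ≤ ε' ^ 2 := by nlinarith
        nlinarith
      constructor
      · have hk := BaiAux.key U V hA hB (x - ε') ε' hε'pos
        rw [sub_add_cancel] at hk
        rw [← htrD, ← htrS, ← hC] at hk
        have h2 : ((Finset.univ.filter fun i => hA.eigenvalues i ≤ x - ε').card : ℝ)
            - ((Finset.univ.filter fun j => hB.eigenvalues j ≤ x).card : ℝ)
            ≤ (p : ℝ) * ε' := by
          have h3 : ε' * (((Finset.univ.filter fun i => hA.eigenvalues i ≤ x - ε').card : ℝ)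
              - ((Finset.univ.filter fun j => hB.eigenvalues j ≤ x).card : ℝ))
              ≤ ε' * ((p : ℝ) * ε') := by
            calc _ ≤ C := hk
              _ ≤ (p : ℝ) * ε' ^ 2 := hCe
              _ = ε' * ((p : ℝ) * ε') := by ring
          exact le_of_mul_le_mul_left h3 hε'pos
        have hip : (0:ℝ) ≤ ((p : ℝ))⁻¹ := by positivity
        have h4 := mul_le_mul_of_nonneg_left h2 hip
        have hpe : ((p : ℝ))⁻¹ * ((p : ℝ) * ε') = ε' := by field_simp
        rw [mul_sub, hpe] at h4
        show F (x - ε') - ε' ≤ G x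
        simp only [hF, hG, esd, one_div]
        linarith [h4]
      · have hk := BaiAux.key V U hB hA x ε' hε'pos
        have hsw1 : Matrix.trace ((V - U) * (V - U)ᵀ) = trD := by
          rw [htrD, ← neg_sub U V, Matrix.transpose_neg, Matrix.neg_mul, Matrix.mul_neg,
            neg_neg]
        have hsw2 : Matrix.trace (V * Vᵀ + U * Uᵀ) = trS := by
          rw [htrS, add_comm]
        rw [hsw1, hsw2, ← hC] at hk
        have h2 : ((Finset.univ.filter fun j => hB.eigenvalues j ≤ x).card : ℝ)
            - ((Finset.univ.filter fun i => hA.eigenvalues i ≤ x + ε').card : ℝ)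
            ≤ (p : ℝ) * ε' := by
          have h3 : ε' * (((Finset.univ.filter fun j => hB.eigenvalues j ≤ x).card : ℝ)
              - ((Finset.univ.filter fun i => hA.eigenvalues i ≤ x + ε').card : ℝ))
              ≤ ε' * ((p : ℝ) * ε') := by
            calc _ ≤ C := hk
              _ ≤ (p : ℝ) * ε' ^ 2 := hCe
              _ = ε' * ((p : ℝ) * ε') := by ring
          exact le_of_mul_le_mul_left h3 hε'pos
        have hip : (0:ℝ) ≤ ((p : ℝ))⁻¹ := by positivity
        have h4 := mul_le_mul_of_nonneg_left h2 hip
        have hpe : ((p : ℝ))⁻¹ * ((p : ℝ) * ε') = ε' := by field_simp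
        rw [mul_sub, hpe] at h4
        show G x ≤ F (x + ε') + ε'
        simp only [hF, hG, esd, one_div]
        linarith [h4]
  have hub : levyDist F G ≤ ε₀ := by
    rw [levyDist]
    by_contra h
    push_neg at h
    obtain ⟨ε', h1, h2⟩ := exists_between h
    exact absurd (csInf_le ⟨0, fun y hy => hy.1.le⟩ (hmem ε' h1)) (not_le.2 h2)
  have hlb : 0 ≤ levyDist F G := by
    rw [levyDist]
    exact le_csInf ⟨ε₀ + 1, hmem _ (lt_add_of_pos_right _ one_pos)⟩ fun y hy => hy.1.le
  calc (levyDist F G) ^ 4 ≤ ε₀ ^ 4 := pow_le_pow_left₀ hlb hub 4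
    _ = R := hε₀4
end
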